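/- arXiv:1902.09570 — 2 statements merged into one kernel-verified Lean document; each statement's English description precedes it below -/
import Mathlib

section
/- There is no finitely supported surjection from ℘_fs(A) (the finitely supported, i.e. finite or cofinite, subsets of the set A of atoms, with the elementwise action) onto A × A (with the componentwise action of finitary permutations). -/
open Pointwise

/-- The group of finitary permutations of the set `A` of atoms: bijections of `A`
whose set of non-fixed points is finite. -/
def FinPerm (A : Type*) : Subgroup (Equiv.Perm A) where
  carrier := {π : Equiv.Perm A | {a : A | π a ≠ a}.Finite}
  one_mem' := by simp
  mul_mem' := by
    intro π σ hπ hσ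
    refine Set.Finite.subset (Set.Finite.union hπ hσ) ?_
    intro a ha
    simp only [Set.mem_setOf_eq, Set.mem_union] at *
    by_contra h
    push_neg at h
    obtain ⟨h1, h2⟩ := h
    exact ha (by rw [Equiv.Perm.mul_apply, h2, h1])
  inv_mem' := by
    intro π hπ
    refine Set.Finite.subset hπ ?_
    intro a ha
    simp only [Set.mem_setOf_eq] at *
    intro h
    exact ha (π.injective (by simp [h]))

/-- An element `x` is finitely supported if some finite set of atoms supports it. -/
def FinSupp (A : Type*) {X : Type*} [SMul (FinPerm A) X] (x : X) : Prop :=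
  ∃ S : Finset A, MulAction.Supports (FinPerm A) (S : Set A) x

/-- The least support of an element: the intersection of all finite sets of atoms
supporting it. -/
def supp (A : Type*) {X : Type*} [SMul (FinPerm A) X] (x : X) : Set A :=
  ⋂₀ {S : Set A | S.Finite ∧ MulAction.Supports (FinPerm A) S x}

/-- A set `S` of atoms supports a function `f` if `f (π • x) = π • f x` for every
finitary permutation `π` fixing `S` pointwise. -/
def SuppFun (A : Type*) {X Y : Type*} [SMul (FinPerm A) X] [SMul (FinPerm A) Y]
    (S : Set A) (f : X → Y) : Prop :=
  ∀ π : FinPerm A, (∀ a ∈ S, π • a = a) → ∀ x, f (π • x) = π • f x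

/-- A set `S` of atoms supports a function `f` between the subsets `X` and `Y` if, for
every finitary permutation `π` fixing `S` pointwise and every `x ∈ X`, we have
`π • x ∈ X`, `π • f x ∈ Y` and `f (π • x) = π • f x`. -/
def SuppFunOn (A : Type*) {U V : Type*} [SMul (FinPerm A) U] [SMul (FinPerm A) V]
    (S : Set A) (X : Set U) (Y : Set V) (f : U → V) : Prop :=
  ∀ π : FinPerm A, (∀ a ∈ S, π • a = a) →
    ∀ x ∈ X, π • x ∈ X ∧ π • f x ∈ Y ∧ f (π • x) = π • f x

/-- `℘_fs(X)`: the finitely supported subsets of the set `X`. -/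
def Pfs (A : Type*) {U : Type*} [SMul (FinPerm A) U] (X : Set U) : Set (Set U) :=
  {Z : Set U | Z ⊆ X ∧ FinSupp A Z}


lemma swap_mem_finPerm {A : Type*} [DecidableEq A] (u v : A) : Equiv.swap u v ∈ FinPerm A := by
  refine Set.Finite.subset ((Set.finite_singleton v).insert u) ?_
  intro a ha
  simp only [Set.mem_setOf_eq, Set.mem_insert_iff, Set.mem_singleton_iff] at *
  by_contra h
  push_neg at h
  exact ha (Equiv.swap_apply_of_ne_of_ne h.1 h.2)

lemma swap_smul_set {A : Type*} [DecidableEq A] (u v : A) (X : Set A)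
    (h : u ∈ X ↔ v ∈ X) :
    (⟨Equiv.swap u v, swap_mem_finPerm u v⟩ : FinPerm A) • X = X := by
  have key : ∀ x, Equiv.swap u v x ∈ X ↔ x ∈ X := by
    intro x
    rcases eq_or_ne x u with rfl | hu
    · simpa using h.symm
    rcases eq_or_ne x v with rfl | hv
    · simpa using h
    · rw [Equiv.swap_apply_of_ne_of_ne hu hv]
  ext x
  constructor
  · rintro ⟨y, hy, rfl⟩
    exact (key y).mpr hy
  · intro hx
    refine ⟨Equiv.swap u v x, ?_, ?_⟩
    · exact (key x).mpr hx
    · exact Equiv.swap_apply_self u v x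

/-- there is no finitely supported surjection from `℘_fs(A)` (the finitely
supported subsets of the set of atoms, with the elementwise action) onto `A × A` (with
the componentwise action). -/
theorem no_finSupp_surjection_pfsAtoms_to_atomPairs {A : Type*} [Infinite A] :
    ¬ ∃ (F : Set A → A × A) (S : Finset A),
      (∀ π : FinPerm A, (∀ a ∈ (S : Set A), π • a = a) →
        ∀ X : Set A, FinSupp A X → F (π • X) = π • F X) ∧
      (∀ p : A × A, ∃ X : Set A, FinSupp A X ∧ F X = p) := by
  classical
  rintro ⟨F, S, hsupp, hsurj⟩
  obtain ⟨a, ha⟩ := (S.finite_toSet).infinite_compl.nonempty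
  obtain ⟨b, hb⟩ := ((S.finite_toSet).union (Set.finite_singleton a)).infinite_compl.nonempty
  simp only [Set.mem_compl_iff, Set.mem_union, Set.mem_singleton_iff, not_or] at ha hb
  obtain ⟨hbS, hba⟩ := hb
  obtain ⟨X, hXfs, hFX⟩ := hsurj (a, b)
  have key : ∀ u v : A, u ∉ (S : Set A) → v ∉ (S : Set A) → (u ∈ X ↔ v ∈ X) →
      (a, b) = (Equiv.swap u v a, Equiv.swap u v b) := by
    intro u v hu hv hmem
    set σ : FinPerm A := ⟨Equiv.swap u v, swap_mem_finPerm u v⟩ with hσ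
    have hfix : ∀ s ∈ (S : Set A), σ • s = s := by
      intro s hs
      show Equiv.swap u v s = s
      exact Equiv.swap_apply_of_ne_of_ne (fun h => hu (h ▸ hs)) (fun h => hv (h ▸ hs))
    have h1 := hsupp σ hfix X hXfs
    rw [hσ, swap_smul_set u v X hmem, hFX] at h1
    exact h1
  by_cases hab : a ∈ X ↔ b ∈ X
  · have h2 := key a b ha hbS hab
    have : a = b := by simpa using congrArg Prod.fst h2
    exact hba this.symm
  · obtain ⟨c, hc⟩ := ((S.finite_toSet).union
      ((Set.finite_singleton b).insert a)).infinite_compl.nonempty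
    simp only [Set.mem_compl_iff, Set.mem_union, Set.mem_insert_iff,
      Set.mem_singleton_iff, not_or] at hc
    obtain ⟨hcS, hca, hcb⟩ := hc
    by_cases haX : a ∈ X
    · have hbX : b ∉ X := fun hbX => hab ⟨fun _ => hbX, fun _ => haX⟩
      by_cases hcX : c ∈ X
      · have h2 := key a c ha hcS (iff_of_true haX hcX)
        have : a = c := by simpa using congrArg Prod.fst h2
        exact hca this.symm
      · have h2 := key b c hbS hcS (iff_of_false hbX hcX)
        have : b = c := by simpa using congrArg Prod.snd h2
        exact hcb this.symm
    · have hbX : b ∈ X := by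
        by_contra hbX
        exact hab (iff_of_false haX hbX)
      by_cases hcX : c ∈ X
      · have h2 := key b c hbS hcS (iff_of_true hbX hcX)
        have : b = c := by simpa using congrArg Prod.snd h2
        exact hcb this.symm
      · have h2 := key a c ha hcS (iff_of_false haX hcX)
        have : a = c := by simpa using congrArg Prod.fst h2
        exact hca this.symm
end

section
/- Let X be a finitely supported subset of an invariant set under finitary permutations of A, and suppose X contains no infinite uniformly supported subset (no infinite subset all of whose elements are supported by one common finite set of atoms). Then ℘_fin(X), the set of finite subsets of X with the elementwise action, also contains no infinite uniformly supported subset. -/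
open Pointwise

section Aux

variable {A : Type*} [DecidableEq A]

/-- The swap of two atoms as a finitary permutation. -/
def swapPerm (a b : A) : FinPerm A :=
  ⟨Equiv.swap a b, Set.Finite.subset ((Set.finite_singleton b).insert a) (by
    intro x hx
    simp only [Set.mem_setOf_eq] at hx
    by_contra hmem
    simp only [Set.mem_insert_iff, Set.mem_singleton_iff, not_or] at hmem
    exact hx (Equiv.swap_apply_of_ne_of_ne hmem.1 hmem.2))⟩

lemma swapPerm_smul (a b c : A) : swapPerm a b • c = Equiv.swap a b c := rfl

lemma swapPerm_mul_self (a b : A) : swapPerm a b * swapPerm a b = 1 :=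
  Subtype.ext (Equiv.swap_mul_self a b)

variable {U : Type*} [MulAction (FinPerm A) U]

/-- Anything supported by a set is fixed by swaps of atoms outside that set. -/
lemma swap_smul_eq_of_supports {T : Set A} {x : U}
    (h : MulAction.Supports (FinPerm A) T x) {a b : A} (ha : a ∉ T) (hb : b ∉ T) :
    swapPerm a b • x = x := by
  refine h _ fun c hc => ?_
  rw [swapPerm_smul]
  exact Equiv.swap_apply_of_ne_of_ne (fun e => ha (e ▸ hc)) (fun e => hb (e ▸ hc))

/-- If `x` is fixed by all swaps of atoms outside `S`, then `S` supports `x`. -/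
lemma supports_of_swaps {S : Set A} {x : U}
    (h : ∀ a b : A, a ∉ S → b ∉ S → a ≠ b → swapPerm a b • x = x) :
    MulAction.Supports (FinPerm A) S x := by
  intro π hπ
  obtain ⟨n, hn⟩ : ∃ n, {a : A | (π : Equiv.Perm A) a ≠ a}.ncard = n := ⟨_, rfl⟩
  induction n using Nat.strong_induction_on generalizing π with
  | _ n ih =>
    rcases Set.eq_empty_or_nonempty {a : A | (π : Equiv.Perm A) a ≠ a} with hM | hM
    · have hπ1 : π = 1 := Subtype.ext (Equiv.ext fun a =>
        not_not.mp (Set.eq_empty_iff_forall_notMem.1 hM a))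
      rw [hπ1, one_smul]
    · obtain ⟨a, ha⟩ := hM
      have ha' : (π : Equiv.Perm A) a ≠ a := ha
      have haS : a ∉ S := fun hc => ha' (hπ hc)
      set b := (π : Equiv.Perm A) a with hbdef
      have hba : b ≠ a := ha'
      have hbM : (π : Equiv.Perm A) b ≠ b := by
        intro hc
        exact hba ((π : Equiv.Perm A).injective (hc.trans hbdef))
      have hbS : b ∉ S := fun hc => hbM (hπ hc)
      set π' : FinPerm A := swapPerm a b * π with hπ'def
      have hπ'app : ∀ c : A, (π' : Equiv.Perm A) c = Equiv.swap a b ((π : Equiv.Perm A) c) :=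
        fun c => rfl
      have hsub : {c : A | (π' : Equiv.Perm A) c ≠ c} ⊆
          {c : A | (π : Equiv.Perm A) c ≠ c} \ {a} := by
        intro c hc
        simp only [Set.mem_setOf_eq, hπ'app] at hc
        constructor
        · intro hfix
          apply hc
          rw [hfix]
          have hca : c ≠ a := by rintro rfl; exact ha' hfix
          have hcb : c ≠ b := by rintro rfl; exact hbM hfix
          exact Equiv.swap_apply_of_ne_of_ne hca hcb
        · intro hca
          simp only [Set.mem_singleton_iff] at hca
          subst hca
          apply hc
          rw [← hbdef, Equiv.swap_apply_right]
      have hcard : {c : A | (π' : Equiv.Perm A) c ≠ c}.ncard < n := by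
        have hMfin : {c : A | (π : Equiv.Perm A) c ≠ c}.Finite := π.2
        have hss : {c : A | (π' : Equiv.Perm A) c ≠ c} ⊂
            {c : A | (π : Equiv.Perm A) c ≠ c} :=
          hsub.trans_ssubset (Set.diff_singleton_ssubset.2 ha)
        exact hn ▸ Set.ncard_lt_ncard hss hMfin
      have hπ'fix : ∀ ⦃c : A⦄, c ∈ S → π' • c = c := by
        intro c hc
        have h1 : (π : Equiv.Perm A) c = c := hπ hc
        show (π' : Equiv.Perm A) c = c
        rw [hπ'app, h1]
        exact Equiv.swap_apply_of_ne_of_ne (fun e => haS (e ▸ hc)) (fun e => hbS (e ▸ hc))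
      have hdec : π = swapPerm a b * π' := by
        rw [hπ'def, ← mul_assoc, swapPerm_mul_self, one_mul]
      calc π • x = swapPerm a b • (π' • x) := by rw [hdec, mul_smul]
        _ = swapPerm a b • x := by rw [ih _ hcard π' hπ'fix rfl]
        _ = x := h a b haS hbS (Ne.symm hba)

variable [Infinite A]

/-- The intersection of two finite supports is a support. -/
lemma supports_inter {S₁ S₂ : Set A} (h₁f : S₁.Finite) (h₂f : S₂.Finite) {x : U}
    (h₁ : MulAction.Supports (FinPerm A) S₁ x) (h₂ : MulAction.Supports (FinPerm A) S₂ x) :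
    MulAction.Supports (FinPerm A) (S₁ ∩ S₂) x := by
  refine supports_of_swaps fun a b hab' hb' hne => ?_
  by_cases ha1 : a ∈ S₁
  · have ha2 : a ∉ S₂ := fun hc => hab' ⟨ha1, hc⟩
    by_cases hb1 : b ∈ S₁
    · have hb2 : b ∉ S₂ := fun hc => hb' ⟨hb1, hc⟩
      exact swap_smul_eq_of_supports h₂ ha2 hb2
    · -- a ∈ S₁ \ S₂, b ∉ S₁. pick fresh c
      obtain ⟨c, hc⟩ :=
        ((h₁f.union h₂f).union ((Set.finite_singleton b).insert a)).infinite_compl.nonempty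
      simp only [Set.mem_compl_iff, Set.mem_union, Set.mem_insert_iff,
        Set.mem_singleton_iff, not_or] at hc
      obtain ⟨⟨hc1, hc2⟩, hca, hcb⟩ := hc
      have key : swapPerm a b = swapPerm c a * swapPerm b c * swapPerm c a :=
        Subtype.ext (Equiv.swap_mul_swap_mul_swap (fun e => hcb e.symm)
          (fun e => hne e.symm)).symm
      rw [key, mul_smul, mul_smul,
        swap_smul_eq_of_supports h₂ hc2 ha2,
        swap_smul_eq_of_supports h₁ hb1 hc1,
        swap_smul_eq_of_supports h₂ hc2 ha2]
  · by_cases hb1 : b ∈ S₁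
    · have hb2 : b ∉ S₂ := fun hc => hb' ⟨hb1, hc⟩
      by_cases ha2 : a ∈ S₂
      · -- a ∈ S₂ \ S₁, b ∈ S₁ \ S₂, fresh c
        obtain ⟨c, hc⟩ :=
          ((h₁f.union h₂f).union ((Set.finite_singleton b).insert a)).infinite_compl.nonempty
        simp only [Set.mem_compl_iff, Set.mem_union, Set.mem_insert_iff,
          Set.mem_singleton_iff, not_or] at hc
        obtain ⟨⟨hc1, hc2⟩, hca, hcb⟩ := hc
        have key : swapPerm a b = swapPerm c a * swapPerm b c * swapPerm c a :=
          Subtype.ext (Equiv.swap_mul_swap_mul_swap (fun e => hcb e.symm)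
            (fun e => hne e.symm)).symm
        rw [key, mul_smul, mul_smul,
          swap_smul_eq_of_supports h₁ hc1 ha1,
          swap_smul_eq_of_supports h₂ hb2 hc2,
          swap_smul_eq_of_supports h₁ hc1 ha1]
      · exact swap_smul_eq_of_supports h₂ ha2 hb2
    · exact swap_smul_eq_of_supports h₁ ha1 hb1

/-- A minimum support. -/
def IsMinSupport (T : Set A) (x : U) : Prop :=
  T.Finite ∧ MulAction.Supports (FinPerm A) T x ∧
    ∀ S : Set A, S.Finite → MulAction.Supports (FinPerm A) S x → T ⊆ S

lemma exists_isMinSupport {x : U} (hx : FinSupp A x) : ∃ T : Set A, IsMinSupport T x := by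
  obtain ⟨S₀, hS₀⟩ := hx
  have hP : ∃ n, ∃ S : Set A, S.Finite ∧ MulAction.Supports (FinPerm A) S x ∧ S.ncard = n :=
    ⟨(S₀ : Set A).ncard, S₀, S₀.finite_toSet, hS₀, rfl⟩
  classical
  obtain ⟨T, hTf, hTs, hTn⟩ := Nat.find_spec hP
  refine ⟨T, hTf, hTs, fun S hSf hSs => ?_⟩
  have hint := supports_inter hTf hSf hTs hSs
  have hle : (T ∩ S).ncard ≤ T.ncard := Set.ncard_le_ncard Set.inter_subset_left hTf
  have hge : Nat.find hP ≤ (T ∩ S).ncard :=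
    Nat.find_le ⟨T ∩ S, hTf.subset Set.inter_subset_left, hint, rfl⟩
  have heq : T ∩ S = T :=
    Set.eq_of_subset_of_ncard_le Set.inter_subset_left (by omega) hTf
  rw [← heq]
  exact Set.inter_subset_right

lemma isMinSupport_unique {T₁ T₂ : Set A} {x : U}
    (h₁ : IsMinSupport T₁ x) (h₂ : IsMinSupport T₂ x) : T₁ = T₂ :=
  Set.Subset.antisymm (h₁.2.2 _ h₂.1 h₂.2.1) (h₂.2.2 _ h₁.1 h₁.2.1)

/-- Supports transform under the action. -/
lemma supports_smul {T : Set A} {x : U} (h : MulAction.Supports (FinPerm A) T x)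
    (π : FinPerm A) :
    MulAction.Supports (FinPerm A) ((π : Equiv.Perm A) '' T) (π • x) := by
  intro σ hσ
  have hfix : ∀ ⦃c : A⦄, c ∈ T → (π⁻¹ * σ * π) • c = c := by
    intro c hc
    have hσc : ((σ : Equiv.Perm A)) ((π : Equiv.Perm A) c) = (π : Equiv.Perm A) c :=
      hσ (Set.mem_image_of_mem _ hc)
    show ((π⁻¹ : FinPerm A) : Equiv.Perm A) ((σ : Equiv.Perm A) ((π : Equiv.Perm A) c)) = c
    rw [hσc]
    exact (π : Equiv.Perm A).symm_apply_apply c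
  have hfx := h _ hfix
  calc σ • π • x = (σ * π) • x := (mul_smul σ π x).symm
    _ = (π * (π⁻¹ * σ * π)) • x := by group
    _ = π • ((π⁻¹ * σ * π) • x) := mul_smul _ _ _
    _ = π • x := by rw [hfx]

lemma isMinSupport_smul {T : Set A} {x : U} (h : IsMinSupport T x) (π : FinPerm A) :
    IsMinSupport ((π : Equiv.Perm A) '' T) (π • x) := by
  refine ⟨h.1.image _, supports_smul h.2.1 π, fun S hSf hSs => ?_⟩
  have h2 := supports_smul hSs π⁻¹
  rw [inv_smul_smul] at h2
  have hsub : T ⊆ ((π⁻¹ : FinPerm A) : Equiv.Perm A) '' S := h.2.2 _ (hSf.image _) h2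
  intro a ha
  obtain ⟨t, ht, rfl⟩ := ha
  obtain ⟨s, hs, hts⟩ := hsub ht
  have hts' : (π : Equiv.Perm A) t = s := by
    rw [← hts]
    exact (π : Equiv.Perm A).apply_symm_apply s
  exact hts' ▸ hs

/-- Key lemma: every element of a finite set supported by `S` is itself supported by `S`. -/
lemma supports_of_mem_finite (hU : ∀ u : U, FinSupp A u) {Z : Set U} (hZ : Z.Finite)
    {S : Finset A} (hS : MulAction.Supports (FinPerm A) (S : Set A) Z)
    {z : U} (hz : z ∈ Z) : MulAction.Supports (FinPerm A) (S : Set A) z := by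
  obtain ⟨T, hT⟩ := exists_isMinSupport (hU z)
  refine MulAction.Supports.mono ?_ hT.2.1
  by_contra hsub
  obtain ⟨a, haT, haS⟩ := Set.not_subset.1 hsub
  have hBinf : ((S : Set A) ∪ T ∪ {a})ᶜ.Infinite :=
    Set.Finite.infinite_compl ((S.finite_toSet.union hT.1).union (Set.finite_singleton a))
  have hmem : ∀ b ∈ ((S : Set A) ∪ T ∪ {a})ᶜ, swapPerm a b • z ∈ Z := by
    intro b hb
    simp only [Set.mem_compl_iff, Set.mem_union, Set.mem_singleton_iff, not_or] at hb
    have hZfix : swapPerm a b • Z = Z :=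
      swap_smul_eq_of_supports hS haS hb.1.1
    rw [← hZfix]
    exact Set.smul_mem_smul_set hz
  have hinj : Set.InjOn (fun b => swapPerm a b • z) (((S : Set A) ∪ T ∪ {a})ᶜ) := by
    intro b hb c hc hbc
    by_contra hne
    simp only [Set.mem_compl_iff, Set.mem_union, Set.mem_singleton_iff, not_or] at hb hc
    have h1 : IsMinSupport ((Equiv.swap a b) '' T) (swapPerm a b • z) :=
      isMinSupport_smul hT (swapPerm a b)
    have h2 : IsMinSupport ((Equiv.swap a c) '' T) (swapPerm a c • z) :=
      isMinSupport_smul hT (swapPerm a c)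
    simp only at hbc
    rw [hbc] at h1
    have heq := isMinSupport_unique h1 h2
    have hbmem : b ∈ (Equiv.swap a b) '' T :=
      ⟨a, haT, Equiv.swap_apply_left a b⟩
    rw [heq] at hbmem
    obtain ⟨t, ht, hswap⟩ := hbmem
    have htb : t = b := by
      by_contra htb
      rcases eq_or_ne t a with rfl | hta
      · rw [Equiv.swap_apply_left] at hswap
        exact hne hswap.symm
      rcases eq_or_ne t c with rfl | htc
      · rw [Equiv.swap_apply_right] at hswap
        exact hb.2 hswap.symm
      · rw [Equiv.swap_apply_of_ne_of_ne hta htc] at hswap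
        exact htb hswap
    rw [htb] at ht
    exact hb.1.2 ht
  have himg : (fun b => swapPerm a b • z) '' (((S : Set A) ∪ T ∪ {a})ᶜ) ⊆ Z := by
    rintro _ ⟨b, hb, rfl⟩
    exact hmem b hb
  exact ((Set.infinite_image_iff hinj).2 hBinf) (hZ.subset himg)

end Aux

/-- if a finitely supported subset `X` of an invariant set contains no
infinite uniformly supported subset, then `℘_fin(X)`, the set of finite subsets of `X`
(with the elementwise action), contains no infinite uniformly supported subset either. -/
theorem finPowerset_no_infinite_uniformly_supported {A U : Type*} [Infinite A]
    [MulAction (FinPerm A) U] (hU : ∀ u : U, FinSupp A u)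
    (X : Set U) (hX : FinSupp A X)
    (h : ¬ ∃ Z : Set U, Z ⊆ X ∧ Z.Infinite ∧
      ∃ S : Finset A, ∀ z ∈ Z, MulAction.Supports (FinPerm A) (S : Set A) z) :
    ¬ ∃ F : Set (Set U), (∀ Z ∈ F, Z ⊆ X ∧ Z.Finite) ∧ F.Infinite ∧
      ∃ S : Finset A, ∀ Z ∈ F, MulAction.Supports (FinPerm A) (S : Set A) Z := by
  classical
  rintro ⟨F, hF, hFinf, S, hFS⟩
  apply h
  refine ⟨⋃₀ F, ?_, ?_, S, ?_⟩
  · intro u hu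
    obtain ⟨Z, hZ, huZ⟩ := hu
    exact (hF Z hZ).1 huZ
  · intro hfin
    exact hFinf (hfin.finite_subsets.subset fun Z hZ => Set.subset_sUnion_of_mem hZ)
  · intro z hz
    obtain ⟨Z, hZF, hzZ⟩ := hz
    exact supports_of_mem_finite hU (hF Z hZF).2 (hFS Z hZF) hzZ
end
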